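/- Selection of the x-bar state for δ > 1: there exists η₀ > 0 such that for any fixed η ∈ (0, η₀), any fixed δ ∈ (1, √(3/2)) with |δ² − 1| < η, and any fixed initial values A0 > 0, B0 > 0, there exist U* > 0 and ν* > 0 such that for all 0 < ν ≤ ν* the following holds: if ω1, ω3, ω5, ω7 solve the asymmetric center-manifold system with viscosity ν, with |ω1(0)|² + |ω3(0)|² = A0, |ω5(0)|² + |ω7(0)|² = B0, with ω1(t) ≠ 0 for all t ≥ 0, and if U(0) ≤ U* where U(t) = |ω3(t)|²/|ω1(t)|², then there exists M₂ > 0 such that U(t) ≤ M₂ e^{−γ t} for all t ≥ 0, where γ = 2ν(1 − 1/δ²) > 0; in particular U(t) → 0 as t → ∞. -/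

import Mathlib

open Set

private lemma hasDerivAt_absSq {f : ℝ → ℂ} {f' : ℂ} {t : ℝ} (hf : HasDerivAt f f' t) :
    HasDerivAt (fun s => ‖f s‖ ^ 2)
      (2 * ((starRingEnd ℂ) (f t) * f').re) t := by
  have hre : HasDerivAt (fun s => (f s).re) f'.re t :=
    Complex.reCLM.hasFDerivAt.comp_hasDerivAt t hf
  have him : HasDerivAt (fun s => (f s).im) f'.im t :=
    Complex.imCLM.hasFDerivAt.comp_hasDerivAt t hf
  have h : HasDerivAt (fun s => (f s).re * (f s).re + (f s).im * (f s).im)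
      (f'.re * (f t).re + (f t).re * f'.re + (f'.im * (f t).im + (f t).im * f'.im)) t :=
    (hre.mul hre).add (him.mul him)
  have heq : (fun s => ‖f s‖ ^ 2)
      = fun s => (f s).re * (f s).re + (f s).im * (f s).im := by
    funext s; rw [← Complex.normSq_apply, ← Complex.sq_norm]
  rw [heq]
  convert h using 1
  simp [Complex.mul_re, Complex.conj_re, Complex.conj_im]
  ring

private lemma reCalc1 (z1 z3 z5 z7 : ℂ) (p q r s : ℝ) :
    2 * ((starRingEnd ℂ) z1 * (-(p : ℂ) * z1 + (q : ℂ) * (z3 * z7 - (starRingEnd ℂ) z3 * z5)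
      + (r : ℂ) * z1 * (s : ℂ))).re
    = -(2*p) * ‖z1‖ ^ 2
      + 2*q * ((z1 * (starRingEnd ℂ) z3 * (starRingEnd ℂ) z7).re - (z1 * z3 * (starRingEnd ℂ) z5).re)
      + 2*r * ‖z1‖ ^ 2 * s := by
  simp only [Complex.sq_norm, Complex.normSq_apply, Complex.mul_re, Complex.mul_im,
    Complex.add_re, Complex.add_im, Complex.sub_re, Complex.sub_im, Complex.neg_re,
    Complex.neg_im, Complex.conj_re, Complex.conj_im, Complex.ofReal_re, Complex.ofReal_im]
  ring

private lemma reCalc3 (z1 z3 z5 z7 : ℂ) (q r s ν : ℝ) :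
    2 * ((starRingEnd ℂ) z3 * (-(ν : ℂ) * z3 + (q : ℂ) * ((starRingEnd ℂ) z1 * z5 - z1 * (starRingEnd ℂ) z7)
      + (r : ℂ) * z3 * (s : ℂ))).re
    = -(2*ν) * ‖z3‖ ^ 2
      + 2*q * ((z1 * z3 * (starRingEnd ℂ) z5).re - (z1 * (starRingEnd ℂ) z3 * (starRingEnd ℂ) z7).re)
      + 2*r * ‖z3‖ ^ 2 * s := by
  simp only [Complex.sq_norm, Complex.normSq_apply, Complex.mul_re, Complex.mul_im,
    Complex.add_re, Complex.add_im, Complex.sub_re, Complex.sub_im, Complex.neg_re,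
    Complex.neg_im, Complex.conj_re, Complex.conj_im, Complex.ofReal_re, Complex.ofReal_im]
  ring

private lemma reCalc5 (z1 z3 z5 : ℂ) (m dd D5 D3 x5 x3 : ℝ) :
    2 * ((starRingEnd ℂ) z5 * (-(m : ℂ) * z5 - (dd : ℂ) * z1 * z3
      - (D5 : ℂ) * z5 * (x5 : ℂ) - (D3 : ℂ) * z5 * (x3 : ℂ))).re
    = -(2*m) * ‖z5‖ ^ 2 - 2*dd * (z1 * z3 * (starRingEnd ℂ) z5).re
      - 2*D5 * x5 * ‖z5‖ ^ 2 - 2*D3 * x3 * ‖z5‖ ^ 2 := by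
  simp only [Complex.sq_norm, Complex.normSq_apply, Complex.mul_re, Complex.mul_im,
    Complex.add_re, Complex.add_im, Complex.sub_re, Complex.sub_im, Complex.neg_re,
    Complex.neg_im, Complex.conj_re, Complex.conj_im, Complex.ofReal_re, Complex.ofReal_im]
  ring

private lemma reCalc7 (z1 z3 z7 : ℂ) (m dd D5 D3 x5 x3 : ℝ) :
    2 * ((starRingEnd ℂ) z7 * (-(m : ℂ) * z7 + (dd : ℂ) * z1 * (starRingEnd ℂ) z3
      - (D5 : ℂ) * z7 * (x5 : ℂ) - (D3 : ℂ) * z7 * (x3 : ℂ))).re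
    = -(2*m) * ‖z7‖ ^ 2 + 2*dd * (z1 * (starRingEnd ℂ) z3 * (starRingEnd ℂ) z7).re
      - 2*D5 * x5 * ‖z7‖ ^ 2 - 2*D3 * x3 * ‖z7‖ ^ 2 := by
  simp only [Complex.sq_norm, Complex.normSq_apply, Complex.mul_re, Complex.mul_im,
    Complex.add_re, Complex.add_im, Complex.sub_re, Complex.sub_im, Complex.neg_re,
    Complex.neg_im, Complex.conj_re, Complex.conj_im, Complex.ofReal_re, Complex.ofReal_im]
  ring

private lemma expDecayIcc {f F : ℝ → ℝ} {t0 t1 c : ℝ} (h01 : t0 ≤ t1)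
    (hd : ∀ t ∈ Icc t0 t1, HasDerivAt f (F t) t)
    (hF : ∀ t ∈ Icc t0 t1, F t ≤ c * f t) :
    f t1 ≤ f t0 * Real.exp (c * (t1 - t0)) := by
  set g : ℝ → ℝ := fun t => f t * Real.exp (-c * t) with hg
  have hgd : ∀ t ∈ Icc t0 t1, HasDerivAt g ((F t - c * f t) * Real.exp (-c * t)) t := by
    intro t ht
    have he : HasDerivAt (fun s : ℝ => Real.exp (-c * s)) (-c * Real.exp (-c * t)) t := by
      have := (Real.hasDerivAt_exp (-c * t)).comp t ((hasDerivAt_id t).const_mul (-c)); simpa [Function.comp_def, mul_comm] using this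
    have h2 : HasDerivAt g _ t := (hd t ht).mul he
    convert h2 using 1
    ring
  have mono : AntitoneOn g (Icc t0 t1) := by
    apply antitoneOn_of_deriv_nonpos (convex_Icc t0 t1)
    · exact fun t ht => ((hgd t ht).continuousAt.continuousWithinAt)
    · exact fun t ht => ((hgd t (interior_subset ht)).differentiableAt.differentiableWithinAt)
    · intro t ht
      rw [interior_Icc] at ht
      rw [(hgd t (Ioo_subset_Icc_self ht)).deriv]
      have h3 := hF t (Ioo_subset_Icc_self ht)
      have h4 : F t - c * f t ≤ 0 := by linarith
      exact mul_nonpos_iff.2 (Or.inr ⟨h4, Real.exp_nonneg _⟩)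
  have h2 : g t1 ≤ g t0 := mono (left_mem_Icc.2 h01) (right_mem_Icc.2 h01) h01
  have h3 := mul_le_mul_of_nonneg_right h2 (Real.exp_nonneg (c * t1))
  calc f t1 = f t1 * Real.exp (-c * t1) * Real.exp (c * t1) := by
        rw [mul_assoc, ← Real.exp_add]; simp
    _ ≤ f t0 * Real.exp (-c * t0) * Real.exp (c * t1) := h3
    _ = f t0 * Real.exp (c * (t1 - t0)) := by rw [mul_assoc, ← Real.exp_add]; ring_nf

private lemma expGrowIcc {f F : ℝ → ℝ} {t0 t1 c : ℝ} (h01 : t0 ≤ t1)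
    (hd : ∀ t ∈ Icc t0 t1, HasDerivAt f (F t) t)
    (hF : ∀ t ∈ Icc t0 t1, c * f t ≤ F t) :
    f t0 * Real.exp (c * (t1 - t0)) ≤ f t1 := by
  have h := expDecayIcc (f := fun t => -f t) (F := fun t => -F t) (c := c) h01
    (fun t ht => (hd t ht).neg) (fun t ht => by have := hF t ht; simp; linarith)
  simp only [neg_mul] at h
  linarith [h]

set_option maxHeartbeats 1000000 in
/-- Selection of the x-bar state for δ > 1. There exists η₀ > 0 such that for
any fixed η ∈ (0,η₀), δ ∈ (1,√(3/2)) with |δ²−1| < η, and initial values A0, B0 > 0, there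
exist U* > 0 and ν* > 0 such that for all 0 < ν ≤ ν*, every solution of the asymmetric
center-manifold system with the given initial energies, ω1(t) ≠ 0 for all t ≥ 0, and
U(0) ≤ U*, satisfies U(t) ≤ M₂ e^{−γt} for some M₂ > 0 and all t ≥ 0, where
U(t) = |ω3(t)|²/|ω1(t)|² and γ = 2ν(1 − 1/δ²) > 0; in particular U(t) → 0 as t → ∞. -/
theorem xbar_selection :
    ∃ η0 > (0 : ℝ), ∀ η : ℝ, 0 < η → η < η0 →
      ∀ δ : ℝ, 1 < δ → δ < Real.sqrt (3 / 2) → |δ ^ 2 - 1| < η →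
        ∀ A0 B0 : ℝ, 0 < A0 → 0 < B0 →
          ∃ Ustar > (0 : ℝ), ∃ νstar > (0 : ℝ),
            ∀ ν : ℝ, 0 < ν → ν ≤ νstar →
              ∀ ω1 ω3 ω5 ω7 : ℝ → ℂ,
                ( ∀ t : ℝ, 0 ≤ t → HasDerivAt ω1
                  (-((ν / δ ^ 2 : ℝ) : ℂ) * ω1 t
                    + ((1 / (δ * (1 + δ ^ 2)) : ℝ) : ℂ) * (ω3 t * ω7 t - (starRingEnd ℂ) (ω3 t) * ω5 t)
                    + ((3 * δ ^ 6 / (2 * ν * (4 + δ ^ 2) * (1 + δ ^ 2) ^ 2) : ℝ) : ℂ) * ω1 t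
                        * ((‖ω5 t‖ ^ 2 + ‖ω7 t‖ ^ 2 : ℝ) : ℂ)) t) →
                ( ∀ t : ℝ, 0 ≤ t → HasDerivAt ω3
                  (-(ν : ℂ) * ω3 t
                    + ((δ ^ 3 / (1 + δ ^ 2) : ℝ) : ℂ) * ((starRingEnd ℂ) (ω1 t) * ω5 t - ω1 t * (starRingEnd ℂ) (ω7 t))
                    + ((3 * δ ^ 2 / (2 * ν * (1 + 4 * δ ^ 2) * (1 + δ ^ 2) ^ 2) : ℝ) : ℂ) * ω3 t
                        * ((‖ω5 t‖ ^ 2 + ‖ω7 t‖ ^ 2 : ℝ) : ℂ)) t) →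
                ( ∀ t : ℝ, 0 ≤ t → HasDerivAt ω5
                  (-((ν * (1 + δ ^ 2) / δ ^ 2 : ℝ) : ℂ) * ω5 t
                    - (((δ ^ 2 - 1) / δ : ℝ) : ℂ) * ω1 t * ω3 t
                    - ((δ ^ 6 * (3 + δ ^ 2) / (2 * ν * (4 + δ ^ 2) * (1 + δ ^ 2)) : ℝ) : ℂ) * ω5 t
                        * ((‖ω1 t‖ ^ 2 : ℝ) : ℂ)
                    - (((1 + 3 * δ ^ 2) / (2 * ν * δ ^ 2 * (1 + 4 * δ ^ 2) * (1 + δ ^ 2)) : ℝ) : ℂ) * ω5 t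
                        * ((‖ω3 t‖ ^ 2 : ℝ) : ℂ)) t) →
                ( ∀ t : ℝ, 0 ≤ t → HasDerivAt ω7
                  (-((ν * (1 + δ ^ 2) / δ ^ 2 : ℝ) : ℂ) * ω7 t
                    + (((δ ^ 2 - 1) / δ : ℝ) : ℂ) * ω1 t * (starRingEnd ℂ) (ω3 t)
                    - ((δ ^ 6 * (3 + δ ^ 2) / (2 * ν * (4 + δ ^ 2) * (1 + δ ^ 2)) : ℝ) : ℂ) * ω7 t
                        * ((‖ω1 t‖ ^ 2 : ℝ) : ℂ)
                    - (((1 + 3 * δ ^ 2) / (2 * ν * δ ^ 2 * (1 + 4 * δ ^ 2) * (1 + δ ^ 2)) : ℝ) : ℂ) * ω7 t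
                        * ((‖ω3 t‖ ^ 2 : ℝ) : ℂ)) t) →
                ‖ω1 0‖ ^ 2 + ‖ω3 0‖ ^ 2 = A0 →
                ‖ω5 0‖ ^ 2 + ‖ω7 0‖ ^ 2 = B0 →
                (∀ t : ℝ, 0 ≤ t → ω1 t ≠ 0) →
                ‖ω3 0‖ ^ 2 / ‖ω1 0‖ ^ 2 ≤ Ustar →
                ∃ M2 > (0 : ℝ),
                  (∀ t : ℝ, 0 ≤ t →
                    ‖ω3 t‖ ^ 2 / ‖ω1 t‖ ^ 2
                      ≤ M2 * Real.exp (-(2 * ν * (1 - 1 / δ ^ 2)) * t))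
                  ∧ Filter.Tendsto
                      (fun t => ‖ω3 t‖ ^ 2 / ‖ω1 t‖ ^ 2)
                      Filter.atTop (nhds 0) := by
  refine ⟨1, one_pos, ?_⟩
  intro η hη hηlt δ hδ1 hδrt hδη A0 B0 hA0 hB0
  have hδ0 : (0:ℝ) < δ := lt_trans one_pos hδ1
  have hδne : δ ≠ 0 := ne_of_gt hδ0
  have hδsq : (1:ℝ) < δ ^ 2 := by nlinarith [hδ1, hδ0]
  have h1δ : (0:ℝ) < 1 + δ ^ 2 := by positivity
  have h4δ : (0:ℝ) < 4 + δ ^ 2 := by positivity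
  have h3δ : (0:ℝ) < 3 + δ ^ 2 := by positivity
  have h14δ : (0:ℝ) < 1 + 4 * δ ^ 2 := by positivity
  have hδ2 : (0:ℝ) < δ ^ 2 := pow_pos hδ0 2
  have hδ6 : (0:ℝ) < δ ^ 6 := pow_pos hδ0 6
  obtain ⟨dd, hdd_def⟩ : ∃ x : ℝ, x = (δ ^ 2 - 1) / δ := ⟨_, rfl⟩
  have hdd_pos : 0 < dd := by rw [hdd_def]; exact div_pos (by linarith) hδ0
  obtain ⟨q1, hq1_def⟩ : ∃ x : ℝ, x = 1 / (δ * (1 + δ ^ 2)) := ⟨_, rfl⟩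
  have hq1_pos : 0 < q1 := by rw [hq1_def]; exact div_pos one_pos (mul_pos hδ0 h1δ)
  obtain ⟨q3, hq3_def⟩ : ∃ x : ℝ, x = δ ^ 3 / (1 + δ ^ 2) := ⟨_, rfl⟩
  have hq3_pos : 0 < q3 := by rw [hq3_def]; exact div_pos (pow_pos hδ0 3) h1δ
  obtain ⟨lam, hlam_def⟩ : ∃ x : ℝ, x = q3 / dd := ⟨_, rfl⟩
  have hlam_pos : 0 < lam := by rw [hlam_def]; exact div_pos hq3_pos hdd_pos
  have hlamdd : lam * dd = q3 := by rw [hlam_def]; field_simp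
  obtain ⟨kap, hkap_def⟩ : ∃ x : ℝ, x = q1 / dd := ⟨_, rfl⟩
  have hkap_pos : 0 < kap := by rw [hkap_def]; exact div_pos hq1_pos hdd_pos
  have hkapdd : kap * dd = q1 := by rw [hkap_def]; field_simp
  obtain ⟨c5, hc5_def⟩ : ∃ x : ℝ, x = δ ^ 6 * (3 + δ ^ 2) / (2 * (4 + δ ^ 2) * (1 + δ ^ 2)) := ⟨_, rfl⟩
  have hc5_pos : 0 < c5 := by
    rw [hc5_def]; exact div_pos (mul_pos hδ6 h3δ) (mul_pos (mul_pos two_pos h4δ) h1δ)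
  obtain ⟨N0, hN0_def⟩ : ∃ x : ℝ, x = A0 + lam * B0 := ⟨_, rfl⟩
  have hN0_pos : 0 < N0 := by rw [hN0_def]; have := mul_pos hlam_pos hB0; linarith
  obtain ⟨CT, hCT_def⟩ : ∃ x : ℝ, x = q1 * Real.sqrt (2 * N0 * (N0 / lam)) := ⟨_, rfl⟩
  have hCT_nonneg : 0 ≤ CT := by
    rw [hCT_def]; exact mul_nonneg hq1_pos.le (Real.sqrt_nonneg _)
  obtain ⟨K, hK_def⟩ : ∃ x : ℝ, x = Real.sqrt (A0 / 2) := ⟨_, rfl⟩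
  have hK_pos : 0 < K := by rw [hK_def]; exact Real.sqrt_pos.2 (by linarith)
  have hKsq : K ^ 2 = A0 / 2 := by rw [hK_def]; exact Real.sq_sqrt (by linarith)
  obtain ⟨T, hT_def⟩ : ∃ x : ℝ, x = min 1 (K / (4 * (CT + 1))) := ⟨_, rfl⟩
  have hT_pos : 0 < T := by
    rw [hT_def]; exact lt_min one_pos (div_pos hK_pos (by linarith))
  have hT_le1 : T ≤ 1 := by rw [hT_def]; exact min_le_left _ _
  have hTK : CT * T ≤ K / 4 := by
    have h1 : T ≤ K / (4 * (CT + 1)) := by rw [hT_def]; exact min_le_right _ _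
    have h2 : CT * T ≤ CT * (K / (4 * (CT + 1))) := mul_le_mul_of_nonneg_left h1 hCT_nonneg
    have h3 : CT * (K / (4 * (CT + 1))) ≤ K / 4 := by
      rw [← mul_div_assoc, div_le_div_iff₀ (by positivity) (by norm_num : (0:ℝ) < 4)]
      have := mul_nonneg hCT_nonneg hK_pos.le
      linarith
    linarith
  obtain ⟨eps, heps_def⟩ : ∃ x : ℝ, x = A0 * dd / (16 * q1) := ⟨_, rfl⟩
  have heps_pos : 0 < eps := by
    rw [heps_def]; exact div_pos (mul_pos hA0 hdd_pos) (by linarith)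
  obtain ⟨KK, hKK_def⟩ : ∃ x : ℝ, x = c5 * A0 * T / 8 := ⟨_, rfl⟩
  have hKK_pos : 0 < KK := by
    rw [hKK_def]; exact div_pos (mul_pos (mul_pos hc5_pos hA0) hT_pos) (by norm_num)
  obtain ⟨ν1, hν1_def⟩ : ∃ x : ℝ, x = KK / max (Real.log (2 * B0 / eps)) 1 := ⟨_, rfl⟩
  have hmax_pos : (0:ℝ) < max (Real.log (2 * B0 / eps)) 1 :=
    lt_of_lt_of_le one_pos (le_max_right _ _)
  have hν1_pos : 0 < ν1 := by rw [hν1_def]; exact div_pos hKK_pos hmax_pos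
  obtain ⟨ν2, hν2_def⟩ : ∃ x : ℝ, x = Real.sqrt (eps * c5 ^ 2 * A0 / (64 * dd ^ 2 * N0)) := ⟨_, rfl⟩
  have hargpos : 0 < eps * c5 ^ 2 * A0 / (64 * dd ^ 2 * N0) := by
    apply div_pos
    · exact mul_pos (mul_pos heps_pos (pow_pos hc5_pos 2)) hA0
    · exact mul_pos (mul_pos (by norm_num) (pow_pos hdd_pos 2)) hN0_pos
  have hν2_pos : 0 < ν2 := by rw [hν2_def]; exact Real.sqrt_pos.2 hargpos
  have hν2sq : ν2 ^ 2 = eps * c5 ^ 2 * A0 / (64 * dd ^ 2 * N0) := by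
    rw [hν2_def]; exact Real.sq_sqrt hargpos.le
  refine ⟨1, one_pos, min (min (1/4) ν1) ν2,
    lt_min (lt_min (by norm_num) hν1_pos) hν2_pos, ?_⟩
  intro ν hν hνle ω1 ω3 ω5 ω7 h1 h3 h5 h7 hinitA hinitB hne hU0
  have hν14 : ν ≤ 1/4 := le_trans hνle (le_trans (min_le_left _ _) (min_le_left _ _))
  have hνν1 : ν ≤ ν1 := le_trans hνle (le_trans (min_le_left _ _) (min_le_right _ _))
  have hνν2 : ν ≤ ν2 := le_trans hνle (min_le_right _ _)
  have hνne : ν ≠ 0 := ne_of_gt hν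
  obtain ⟨p1, hp1_def⟩ : ∃ x : ℝ, x = ν / δ ^ 2 := ⟨_, rfl⟩
  have hp1_pos : 0 < p1 := by rw [hp1_def]; exact div_pos hν hδ2
  have hp1ν : p1 ≤ ν := by rw [hp1_def]; exact div_le_self hν.le (by linarith)
  obtain ⟨mu, hmu_def⟩ : ∃ x : ℝ, x = ν * (1 + δ ^ 2) / δ ^ 2 := ⟨_, rfl⟩
  have hmu_eq : mu = p1 + ν := by rw [hmu_def, hp1_def]; field_simp
  obtain ⟨r1, hr1_def⟩ : ∃ x : ℝ, x = 3 * δ ^ 6 / (2 * ν * (4 + δ ^ 2) * (1 + δ ^ 2) ^ 2) := ⟨_, rfl⟩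
  have hr1_pos : 0 < r1 := by
    rw [hr1_def]
    exact div_pos (by positivity) (mul_pos (mul_pos (mul_pos two_pos hν) h4δ) (pow_pos h1δ 2))
  obtain ⟨r3, hr3_def⟩ : ∃ x : ℝ, x = 3 * δ ^ 2 / (2 * ν * (1 + 4 * δ ^ 2) * (1 + δ ^ 2) ^ 2) := ⟨_, rfl⟩
  have hr3_pos : 0 < r3 := by
    rw [hr3_def]
    exact div_pos (by positivity) (mul_pos (mul_pos (mul_pos two_pos hν) h14δ) (pow_pos h1δ 2))
  obtain ⟨D5, hD5_def⟩ : ∃ x : ℝ, x = δ ^ 6 * (3 + δ ^ 2) / (2 * ν * (4 + δ ^ 2) * (1 + δ ^ 2)) := ⟨_, rfl⟩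
  have hD5_pos : 0 < D5 := by
    rw [hD5_def]
    exact div_pos (mul_pos hδ6 h3δ) (mul_pos (mul_pos (mul_pos two_pos hν) h4δ) h1δ)
  obtain ⟨D3, hD3_def⟩ : ∃ x : ℝ, x = (1 + 3 * δ ^ 2) / (2 * ν * δ ^ 2 * (1 + 4 * δ ^ 2) * (1 + δ ^ 2)) := ⟨_, rfl⟩
  have hD3_pos : 0 < D3 := by
    rw [hD3_def]
    exact div_pos (by positivity)
      (mul_pos (mul_pos (mul_pos (mul_pos two_pos hν) hδ2) h14δ) h1δ)
  have hr3D3 : r3 ≤ lam * D3 := by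
    have h2 : r3 * dd ≤ q3 * D3 := by
      have he : q3 * D3 - r3 * dd = 2 * δ / (ν * (1 + 4 * δ ^ 2) * (1 + δ ^ 2) ^ 2) := by
        rw [hq3_def, hD3_def, hr3_def, hdd_def]; field_simp; ring
      have hpos : 0 < 2 * δ / (ν * (1 + 4 * δ ^ 2) * (1 + δ ^ 2) ^ 2) :=
        div_pos (by linarith) (mul_pos (mul_pos hν h14δ) (pow_pos h1δ 2))
      linarith
    have h3 : q3 * D3 = lam * D3 * dd := by rw [← hlamdd]; ring
    exact le_of_mul_le_mul_right (by rw [← h3]; exact h2) hdd_pos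
  have hD5c5 : D5 = c5 / ν := by rw [hD5_def, hc5_def]; field_simp
  -- derivative identities for the squared moduli
  have hda : ∀ t, 0 ≤ t → HasDerivAt (fun s => ‖ω1 s‖ ^ 2)
      (-(2*p1) * ‖ω1 t‖ ^ 2
        + 2*q1 * ((ω1 t * (starRingEnd ℂ) (ω3 t) * (starRingEnd ℂ) (ω7 t)).re
            - (ω1 t * ω3 t * (starRingEnd ℂ) (ω5 t)).re)
        + 2*r1 * ‖ω1 t‖ ^ 2 * (‖ω5 t‖ ^ 2 + ‖ω7 t‖ ^ 2)) t := by
    intro t ht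
    have h := hasDerivAt_absSq (h1 t ht)
    rw [reCalc1 (ω1 t) (ω3 t) (ω5 t) (ω7 t) (ν / δ ^ 2) (1 / (δ * (1 + δ ^ 2)))
      (3 * δ ^ 6 / (2 * ν * (4 + δ ^ 2) * (1 + δ ^ 2) ^ 2))
      (‖ω5 t‖ ^ 2 + ‖ω7 t‖ ^ 2)] at h
    rw [hp1_def, hq1_def, hr1_def]
    exact h
  have hdb : ∀ t, 0 ≤ t → HasDerivAt (fun s => ‖ω3 s‖ ^ 2)
      (-(2*ν) * ‖ω3 t‖ ^ 2
        + 2*q3 * ((ω1 t * ω3 t * (starRingEnd ℂ) (ω5 t)).re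
            - (ω1 t * (starRingEnd ℂ) (ω3 t) * (starRingEnd ℂ) (ω7 t)).re)
        + 2*r3 * ‖ω3 t‖ ^ 2 * (‖ω5 t‖ ^ 2 + ‖ω7 t‖ ^ 2)) t := by
    intro t ht
    have h := hasDerivAt_absSq (h3 t ht)
    rw [reCalc3 (ω1 t) (ω3 t) (ω5 t) (ω7 t) (δ ^ 3 / (1 + δ ^ 2))
      (3 * δ ^ 2 / (2 * ν * (1 + 4 * δ ^ 2) * (1 + δ ^ 2) ^ 2))
      (‖ω5 t‖ ^ 2 + ‖ω7 t‖ ^ 2) ν] at h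
    rw [hq3_def, hr3_def]
    exact h
  have hd5 : ∀ t, 0 ≤ t → HasDerivAt (fun s => ‖ω5 s‖ ^ 2)
      (-(2*mu) * ‖ω5 t‖ ^ 2
        - 2*dd * (ω1 t * ω3 t * (starRingEnd ℂ) (ω5 t)).re
        - 2*D5 * ‖ω1 t‖ ^ 2 * ‖ω5 t‖ ^ 2
        - 2*D3 * ‖ω3 t‖ ^ 2 * ‖ω5 t‖ ^ 2) t := by
    intro t ht
    have h := hasDerivAt_absSq (h5 t ht)
    rw [reCalc5 (ω1 t) (ω3 t) (ω5 t) (ν * (1 + δ ^ 2) / δ ^ 2) ((δ ^ 2 - 1) / δ)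
      (δ ^ 6 * (3 + δ ^ 2) / (2 * ν * (4 + δ ^ 2) * (1 + δ ^ 2)))
      ((1 + 3 * δ ^ 2) / (2 * ν * δ ^ 2 * (1 + 4 * δ ^ 2) * (1 + δ ^ 2)))
      (‖ω1 t‖ ^ 2) (‖ω3 t‖ ^ 2)] at h
    rw [hmu_def, hdd_def, hD5_def, hD3_def]
    exact h
  have hd7 : ∀ t, 0 ≤ t → HasDerivAt (fun s => ‖ω7 s‖ ^ 2)
      (-(2*mu) * ‖ω7 t‖ ^ 2
        + 2*dd * (ω1 t * (starRingEnd ℂ) (ω3 t) * (starRingEnd ℂ) (ω7 t)).re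
        - 2*D5 * ‖ω1 t‖ ^ 2 * ‖ω7 t‖ ^ 2
        - 2*D3 * ‖ω3 t‖ ^ 2 * ‖ω7 t‖ ^ 2) t := by
    intro t ht
    have h := hasDerivAt_absSq (h7 t ht)
    rw [reCalc7 (ω1 t) (ω3 t) (ω7 t) (ν * (1 + δ ^ 2) / δ ^ 2) ((δ ^ 2 - 1) / δ)
      (δ ^ 6 * (3 + δ ^ 2) / (2 * ν * (4 + δ ^ 2) * (1 + δ ^ 2)))
      ((1 + 3 * δ ^ 2) / (2 * ν * δ ^ 2 * (1 + 4 * δ ^ 2) * (1 + δ ^ 2)))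
      (‖ω1 t‖ ^ 2) (‖ω3 t‖ ^ 2)] at h
    rw [hmu_def, hdd_def, hD5_def, hD3_def]
    exact h
  -- basic positivity facts
  have hapos : ∀ t, 0 ≤ t → 0 < ‖ω1 t‖ ^ 2 :=
    fun t ht => pow_pos (norm_pos_iff.mpr (hne t ht)) 2
  have hreb : ∀ z : ℂ, z.re ≤ ‖z‖ ∧ -‖z‖ ≤ z.re := by
    intro z
    have h := Complex.abs_re_le_norm z
    exact ⟨by linarith [le_abs_self z.re], by linarith [neg_abs_le z.re]⟩
  have hXb : ∀ t : ℝ, (ω1 t * ω3 t * (starRingEnd ℂ) (ω5 t)).re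
        ≤ ‖ω1 t‖ * ‖ω3 t‖ * ‖ω5 t‖
      ∧ -(‖ω1 t‖ * ‖ω3 t‖ * ‖ω5 t‖)
        ≤ (ω1 t * ω3 t * (starRingEnd ℂ) (ω5 t)).re := by
    intro t
    have h := hreb (ω1 t * ω3 t * (starRingEnd ℂ) (ω5 t))
    rw [norm_mul, norm_mul, Complex.norm_conj] at h
    exact h
  have hYb : ∀ t : ℝ, (ω1 t * (starRingEnd ℂ) (ω3 t) * (starRingEnd ℂ) (ω7 t)).re
        ≤ ‖ω1 t‖ * ‖ω3 t‖ * ‖ω7 t‖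
      ∧ -(‖ω1 t‖ * ‖ω3 t‖ * ‖ω7 t‖)
        ≤ (ω1 t * (starRingEnd ℂ) (ω3 t) * (starRingEnd ℂ) (ω7 t)).re := by
    intro t
    have h := hreb (ω1 t * (starRingEnd ℂ) (ω3 t) * (starRingEnd ℂ) (ω7 t))
    rw [norm_mul, norm_mul, Complex.norm_conj, Complex.norm_conj] at h
    exact h
  -- N = b + lam*S decays at rate 2ν
  have hNineq : ∀ s : ℝ,
      (-(2*ν) * ‖ω3 s‖ ^ 2
        + 2*q3 * ((ω1 s * ω3 s * (starRingEnd ℂ) (ω5 s)).re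
            - (ω1 s * (starRingEnd ℂ) (ω3 s) * (starRingEnd ℂ) (ω7 s)).re)
        + 2*r3 * ‖ω3 s‖ ^ 2 * (‖ω5 s‖ ^ 2 + ‖ω7 s‖ ^ 2))
      + lam * ((-(2*mu) * ‖ω5 s‖ ^ 2
            - 2*dd * (ω1 s * ω3 s * (starRingEnd ℂ) (ω5 s)).re
            - 2*D5 * ‖ω1 s‖ ^ 2 * ‖ω5 s‖ ^ 2
            - 2*D3 * ‖ω3 s‖ ^ 2 * ‖ω5 s‖ ^ 2)
          + (-(2*mu) * ‖ω7 s‖ ^ 2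
            + 2*dd * (ω1 s * (starRingEnd ℂ) (ω3 s) * (starRingEnd ℂ) (ω7 s)).re
            - 2*D5 * ‖ω1 s‖ ^ 2 * ‖ω7 s‖ ^ 2
            - 2*D3 * ‖ω3 s‖ ^ 2 * ‖ω7 s‖ ^ 2))
      ≤ -(2*ν) * (‖ω3 s‖ ^ 2
          + lam * (‖ω5 s‖ ^ 2 + ‖ω7 s‖ ^ 2)) := by
    intro s
    have eX : lam*dd*((ω1 s * ω3 s * (starRingEnd ℂ) (ω5 s)).re)
        = q3*((ω1 s * ω3 s * (starRingEnd ℂ) (ω5 s)).re) := by rw [hlamdd]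
    have eY : lam*dd*((ω1 s * (starRingEnd ℂ) (ω3 s) * (starRingEnd ℂ) (ω7 s)).re)
        = q3*((ω1 s * (starRingEnd ℂ) (ω3 s) * (starRingEnd ℂ) (ω7 s)).re) := by rw [hlamdd]
    have n1 : 0 ≤ (lam*D3 - r3) * (‖ω3 s‖ ^ 2
        * (‖ω5 s‖ ^ 2 + ‖ω7 s‖ ^ 2)) :=
      mul_nonneg (by linarith) (by positivity)
    have n2 : 0 ≤ lam*D5 * (‖ω1 s‖ ^ 2
        * (‖ω5 s‖ ^ 2 + ‖ω7 s‖ ^ 2)) :=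
      mul_nonneg (mul_nonneg hlam_pos.le hD5_pos.le) (by positivity)
    have n3 : 0 ≤ lam*(mu - ν) * (‖ω5 s‖ ^ 2 + ‖ω7 s‖ ^ 2) :=
      mul_nonneg (mul_nonneg hlam_pos.le (by rw [hmu_eq]; linarith)) (by positivity)
    linarith only [eX, eY, n1, n2, n3]
  have hNdecay : ∀ t0 t : ℝ, 0 ≤ t0 → t0 ≤ t →
      ‖ω3 t‖ ^ 2 + lam * (‖ω5 t‖ ^ 2 + ‖ω7 t‖ ^ 2)
        ≤ (‖ω3 t0‖ ^ 2 + lam * (‖ω5 t0‖ ^ 2 + ‖ω7 t0‖ ^ 2))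
            * Real.exp (-(2*ν) * (t - t0)) := by
    intro t0 t ht0 htt
    exact expDecayIcc
      (f := fun s => ‖ω3 s‖ ^ 2 + lam * (‖ω5 s‖ ^ 2 + ‖ω7 s‖ ^ 2))
      (F := fun s => (-(2*ν) * ‖ω3 s‖ ^ 2
        + 2*q3 * ((ω1 s * ω3 s * (starRingEnd ℂ) (ω5 s)).re
            - (ω1 s * (starRingEnd ℂ) (ω3 s) * (starRingEnd ℂ) (ω7 s)).re)
        + 2*r3 * ‖ω3 s‖ ^ 2 * (‖ω5 s‖ ^ 2 + ‖ω7 s‖ ^ 2))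
      + lam * ((-(2*mu) * ‖ω5 s‖ ^ 2
            - 2*dd * (ω1 s * ω3 s * (starRingEnd ℂ) (ω5 s)).re
            - 2*D5 * ‖ω1 s‖ ^ 2 * ‖ω5 s‖ ^ 2
            - 2*D3 * ‖ω3 s‖ ^ 2 * ‖ω5 s‖ ^ 2)
          + (-(2*mu) * ‖ω7 s‖ ^ 2
            + 2*dd * (ω1 s * (starRingEnd ℂ) (ω3 s) * (starRingEnd ℂ) (ω7 s)).re
            - 2*D5 * ‖ω1 s‖ ^ 2 * ‖ω7 s‖ ^ 2
            - 2*D3 * ‖ω3 s‖ ^ 2 * ‖ω7 s‖ ^ 2)))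
      htt
      (fun s hs => (hdb s (le_trans ht0 hs.1)).add
        (((hd5 s (le_trans ht0 hs.1)).add (hd7 s (le_trans ht0 hs.1))).const_mul lam))
      (fun s _ => hNineq s)
  -- M = a - kap*S decays no faster than rate 2*p1
  have hMineq : ∀ s : ℝ,
      -(2*p1) * (‖ω1 s‖ ^ 2
          - kap * (‖ω5 s‖ ^ 2 + ‖ω7 s‖ ^ 2))
      ≤ (-(2*p1) * ‖ω1 s‖ ^ 2
        + 2*q1 * ((ω1 s * (starRingEnd ℂ) (ω3 s) * (starRingEnd ℂ) (ω7 s)).re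
            - (ω1 s * ω3 s * (starRingEnd ℂ) (ω5 s)).re)
        + 2*r1 * ‖ω1 s‖ ^ 2 * (‖ω5 s‖ ^ 2 + ‖ω7 s‖ ^ 2))
      - kap * ((-(2*mu) * ‖ω5 s‖ ^ 2
            - 2*dd * (ω1 s * ω3 s * (starRingEnd ℂ) (ω5 s)).re
            - 2*D5 * ‖ω1 s‖ ^ 2 * ‖ω5 s‖ ^ 2
            - 2*D3 * ‖ω3 s‖ ^ 2 * ‖ω5 s‖ ^ 2)
          + (-(2*mu) * ‖ω7 s‖ ^ 2
            + 2*dd * (ω1 s * (starRingEnd ℂ) (ω3 s) * (starRingEnd ℂ) (ω7 s)).re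
            - 2*D5 * ‖ω1 s‖ ^ 2 * ‖ω7 s‖ ^ 2
            - 2*D3 * ‖ω3 s‖ ^ 2 * ‖ω7 s‖ ^ 2)) := by
    intro s
    have eX : kap*dd*((ω1 s * ω3 s * (starRingEnd ℂ) (ω5 s)).re)
        = q1*((ω1 s * ω3 s * (starRingEnd ℂ) (ω5 s)).re) := by rw [hkapdd]
    have eY : kap*dd*((ω1 s * (starRingEnd ℂ) (ω3 s) * (starRingEnd ℂ) (ω7 s)).re)
        = q1*((ω1 s * (starRingEnd ℂ) (ω3 s) * (starRingEnd ℂ) (ω7 s)).re) := by rw [hkapdd]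
    have n3 : 0 ≤ kap*(mu - p1) * (‖ω5 s‖ ^ 2 + ‖ω7 s‖ ^ 2) :=
      mul_nonneg (mul_nonneg hkap_pos.le (by rw [hmu_eq]; linarith)) (by positivity)
    have n4 : 0 ≤ r1 * (‖ω1 s‖ ^ 2
        * (‖ω5 s‖ ^ 2 + ‖ω7 s‖ ^ 2)) :=
      mul_nonneg hr1_pos.le (by positivity)
    have n5 : 0 ≤ kap*D5 * (‖ω1 s‖ ^ 2
        * (‖ω5 s‖ ^ 2 + ‖ω7 s‖ ^ 2)) :=
      mul_nonneg (mul_nonneg hkap_pos.le hD5_pos.le) (by positivity)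
    have n6 : 0 ≤ kap*D3 * (‖ω3 s‖ ^ 2
        * (‖ω5 s‖ ^ 2 + ‖ω7 s‖ ^ 2)) :=
      mul_nonneg (mul_nonneg hkap_pos.le hD3_pos.le) (by positivity)
    linarith only [eX, eY, n3, n4, n5, n6]
  have hMgrow : ∀ t0 t : ℝ, 0 ≤ t0 → t0 ≤ t →
      (‖ω1 t0‖ ^ 2 - kap * (‖ω5 t0‖ ^ 2 + ‖ω7 t0‖ ^ 2))
          * Real.exp (-(2*p1) * (t - t0))
        ≤ ‖ω1 t‖ ^ 2 - kap * (‖ω5 t‖ ^ 2 + ‖ω7 t‖ ^ 2) := by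
    intro t0 t ht0 htt
    exact expGrowIcc
      (f := fun s => ‖ω1 s‖ ^ 2
          - kap * (‖ω5 s‖ ^ 2 + ‖ω7 s‖ ^ 2))
      (F := fun s => (-(2*p1) * ‖ω1 s‖ ^ 2
        + 2*q1 * ((ω1 s * (starRingEnd ℂ) (ω3 s) * (starRingEnd ℂ) (ω7 s)).re
            - (ω1 s * ω3 s * (starRingEnd ℂ) (ω5 s)).re)
        + 2*r1 * ‖ω1 s‖ ^ 2 * (‖ω5 s‖ ^ 2 + ‖ω7 s‖ ^ 2))
      - kap * ((-(2*mu) * ‖ω5 s‖ ^ 2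
            - 2*dd * (ω1 s * ω3 s * (starRingEnd ℂ) (ω5 s)).re
            - 2*D5 * ‖ω1 s‖ ^ 2 * ‖ω5 s‖ ^ 2
            - 2*D3 * ‖ω3 s‖ ^ 2 * ‖ω5 s‖ ^ 2)
          + (-(2*mu) * ‖ω7 s‖ ^ 2
            + 2*dd * (ω1 s * (starRingEnd ℂ) (ω3 s) * (starRingEnd ℂ) (ω7 s)).re
            - 2*D5 * ‖ω1 s‖ ^ 2 * ‖ω7 s‖ ^ 2
            - 2*D3 * ‖ω3 s‖ ^ 2 * ‖ω7 s‖ ^ 2)))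
      htt
      (fun s hs => (hda s (le_trans ht0 hs.1)).sub
        (((hd5 s (le_trans ht0 hs.1)).add (hd7 s (le_trans ht0 hs.1))).const_mul kap))
      (fun s _ => hMineq s)
  -- N is bounded by N0
  have hNle : ∀ s : ℝ, 0 ≤ s →
      ‖ω3 s‖ ^ 2 + lam * (‖ω5 s‖ ^ 2 + ‖ω7 s‖ ^ 2) ≤ N0 := by
    intro s hs
    have h0 : ‖ω3 0‖ ^ 2 + lam * (‖ω5 0‖ ^ 2 + ‖ω7 0‖ ^ 2)
        ≤ N0 := by
      rw [hinitB, hN0_def]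
      have := hapos 0 le_rfl
      linarith
    have h := hNdecay 0 s le_rfl hs
    have hexple : Real.exp (-(2*ν) * (s - 0)) ≤ 1 := by
      rw [← Real.exp_zero]
      exact Real.exp_le_exp.2 (by nlinarith only [hν, hs])
    have hnonneg : 0 ≤ ‖ω3 0‖ ^ 2
        + lam * (‖ω5 0‖ ^ 2 + ‖ω7 0‖ ^ 2) :=
      add_nonneg (by positivity) (mul_nonneg hlam_pos.le (by positivity))
    have h2 := mul_le_mul_of_nonneg_left hexple hnonneg
    linarith only [h, h0, h2]
  have hb_le : ∀ s : ℝ, 0 ≤ s → ‖ω3 s‖ ^ 2 ≤ N0 := by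
    intro s hs
    have h := hNle s hs
    have : 0 ≤ lam * (‖ω5 s‖ ^ 2 + ‖ω7 s‖ ^ 2) :=
      mul_nonneg hlam_pos.le (by positivity)
    linarith
  have hlamS_le : ∀ s : ℝ, 0 ≤ s →
      lam * (‖ω5 s‖ ^ 2 + ‖ω7 s‖ ^ 2) ≤ N0 := by
    intro s hs
    have h := hNle s hs
    have : (0:ℝ) ≤ ‖ω3 s‖ ^ 2 := by positivity
    linarith
  have hsq1 : ∀ s : ℝ, Real.sqrt (‖ω1 s‖ ^ 2) = ‖ω1 s‖ :=
    fun s => Real.sqrt_sq (norm_nonneg _)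
  -- lower bound for the derivative of a = |ω1|²
  have hFa_lower : ∀ s : ℝ, 0 ≤ s →
      -(2*ν) * ‖ω1 s‖ ^ 2 - 2*CT * ‖ω1 s‖
        ≤ -(2*p1) * ‖ω1 s‖ ^ 2
          + 2*q1 * ((ω1 s * (starRingEnd ℂ) (ω3 s) * (starRingEnd ℂ) (ω7 s)).re
              - (ω1 s * ω3 s * (starRingEnd ℂ) (ω5 s)).re)
          + 2*r1 * ‖ω1 s‖ ^ 2 * (‖ω5 s‖ ^ 2 + ‖ω7 s‖ ^ 2) := by
    intro s hs
    have hX1 := (hXb s).1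
    have hY2 := (hYb s).2
    have hb := hb_le s hs
    have hlamS := hlamS_le s hs
    have hQ : (‖ω5 s‖ + ‖ω7 s‖) ^ 2 ≤ 2 * (N0 / lam) := by
      have hSle : ‖ω5 s‖ ^ 2 + ‖ω7 s‖ ^ 2 ≤ N0 / lam := by
        rw [le_div_iff₀ hlam_pos]
        linarith only [hlamS]
      nlinarith only [sq_nonneg (‖ω5 s‖ - ‖ω7 s‖), hSle]
    have hPQ : (‖ω3 s‖ * (‖ω5 s‖ + ‖ω7 s‖)) ^ 2
        ≤ 2 * N0 * (N0 / lam) := by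
      have h2 := mul_le_mul hb hQ (sq_nonneg _) hN0_pos.le
      calc (‖ω3 s‖ * (‖ω5 s‖ + ‖ω7 s‖)) ^ 2
          = ‖ω3 s‖ ^ 2 * (‖ω5 s‖ + ‖ω7 s‖) ^ 2 := by ring
        _ ≤ N0 * (2 * (N0 / lam)) := h2
        _ = 2 * N0 * (N0 / lam) := by ring
    have hsqrt : ‖ω3 s‖ * (‖ω5 s‖ + ‖ω7 s‖)
        ≤ Real.sqrt (2 * N0 * (N0 / lam)) := Real.le_sqrt_of_sq_le hPQ
    have hm : q1 * ‖ω1 s‖ * (‖ω3 s‖ * (‖ω5 s‖ + ‖ω7 s‖))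
        ≤ q1 * ‖ω1 s‖ * Real.sqrt (2 * N0 * (N0 / lam)) :=
      mul_le_mul_of_nonneg_left hsqrt (mul_nonneg hq1_pos.le (norm_nonneg _))
    have hXY : q1 * ((ω1 s * ω3 s * (starRingEnd ℂ) (ω5 s)).re
          - (ω1 s * (starRingEnd ℂ) (ω3 s) * (starRingEnd ℂ) (ω7 s)).re)
        ≤ q1 * (‖ω1 s‖ * ‖ω3 s‖ * ‖ω5 s‖
          + ‖ω1 s‖ * ‖ω3 s‖ * ‖ω7 s‖) :=
      mul_le_mul_of_nonneg_left (by linarith only [hX1, hY2]) hq1_pos.le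
    have hνp1 : 0 ≤ (ν - p1) * ‖ω1 s‖ ^ 2 :=
      mul_nonneg (by linarith only [hp1ν]) (by positivity)
    have hr1S : 0 ≤ 2*r1 * ‖ω1 s‖ ^ 2
        * (‖ω5 s‖ ^ 2 + ‖ω7 s‖ ^ 2) :=
      mul_nonneg (mul_nonneg (by linarith only [hr1_pos]) (by positivity)) (by positivity)
    rw [hCT_def]
    linarith only [hm, hXY, hνp1, hr1S]
  -- derivative of the comparison function
  have hφ : ∀ s : ℝ, HasDerivAt (fun u : ℝ => K * Real.exp (-ν*u) - CT*u)
      (K * (-ν * Real.exp (-ν*s)) - CT) s := by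
    intro s
    have he : HasDerivAt (fun u : ℝ => Real.exp (-ν*u)) (-ν * Real.exp (-ν*s)) s := by
      have := (Real.hasDerivAt_exp (-ν*s)).comp s ((hasDerivAt_id s).const_mul (-ν))
      simpa [Function.comp_def, mul_comm] using this
    have h2 : HasDerivAt (fun u : ℝ => K * Real.exp (-ν*u) - CT*u) _ s := (he.const_mul K).sub ((hasDerivAt_id s).const_mul CT)
    simpa using h2
  -- lower bound |ω1 t| ≥ K/2 on [0,T]
  have hA1low : ∀ t ∈ Icc (0:ℝ) T, K/2 ≤ ‖ω1 t‖ := by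
    intro t ht
    have hw := expGrowIcc
      (f := fun s => Real.sqrt (‖ω1 s‖ ^ 2) - (K * Real.exp (-ν*s) - CT*s))
      (F := fun s => (-(2*p1) * ‖ω1 s‖ ^ 2
          + 2*q1 * ((ω1 s * (starRingEnd ℂ) (ω3 s) * (starRingEnd ℂ) (ω7 s)).re
              - (ω1 s * ω3 s * (starRingEnd ℂ) (ω5 s)).re)
          + 2*r1 * ‖ω1 s‖ ^ 2 * (‖ω5 s‖ ^ 2 + ‖ω7 s‖ ^ 2))
            / (2 * Real.sqrt (‖ω1 s‖ ^ 2))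
          - (K * (-ν * Real.exp (-ν*s)) - CT))
      (c := -ν) (t0 := 0) (t1 := t) ht.1
      (fun s hs => ((hda s hs.1).sqrt (ne_of_gt (hapos s hs.1))).sub (hφ s))
      (fun s hs => by
        have hs0 : (0:ℝ) ≤ s := hs.1
        have hA1pos : 0 < ‖ω1 s‖ := norm_pos_iff.mpr (hne s hs0)
        have hcore := hFa_lower s hs0
        beta_reduce
        rw [hsq1 s]
        have hdiv : -ν * ‖ω1 s‖ - CT
            ≤ (-(2*p1) * ‖ω1 s‖ ^ 2
              + 2*q1 * ((ω1 s * (starRingEnd ℂ) (ω3 s) * (starRingEnd ℂ) (ω7 s)).re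
                  - (ω1 s * ω3 s * (starRingEnd ℂ) (ω5 s)).re)
              + 2*r1 * ‖ω1 s‖ ^ 2 * (‖ω5 s‖ ^ 2 + ‖ω7 s‖ ^ 2))
              / (2 * ‖ω1 s‖) := by
          rw [le_div_iff₀ (by linarith only [hA1pos])]
          nlinarith only [hcore, hA1pos]
        have hterm : 0 ≤ ν * (CT * s) := mul_nonneg hν.le (mul_nonneg hCT_nonneg hs0)
        linarith only [hdiv, hterm])
    have hw0 : 0 ≤ Real.sqrt (‖ω1 0‖ ^ 2) - (K * Real.exp (-ν*0) - CT*0) := by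
      have hb0a0 : ‖ω3 0‖ ^ 2 ≤ ‖ω1 0‖ ^ 2 :=
        (div_le_one (hapos 0 le_rfl)).mp hU0
      have ha0 : A0/2 ≤ ‖ω1 0‖ ^ 2 := by linarith only [hb0a0, hinitA]
      have hKle : K ≤ Real.sqrt (‖ω1 0‖ ^ 2) := by
        rw [hK_def]; exact Real.sqrt_le_sqrt ha0
      simp only [mul_zero, Real.exp_zero, mul_one, sub_zero]
      linarith only [hKle]
    have hwt : 0 ≤ Real.sqrt (‖ω1 t‖ ^ 2) - (K * Real.exp (-ν*t) - CT*t) := by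
      beta_reduce at hw
      have := mul_nonneg hw0 (Real.exp_nonneg (-ν * (t - 0)))
      linarith only [this, hw]
    rw [hsq1 t] at hwt
    have he1 : -(ν*t) + 1 ≤ Real.exp (-ν*t) := by
      have := Real.add_one_le_exp (-(ν*t))
      calc -(ν*t) + 1 ≤ Real.exp (-(ν*t)) := this
        _ = Real.exp (-ν*t) := by ring_nf
    have hνt : ν * t ≤ 1/4 := by nlinarith only [ht.1, ht.2, hT_le1, hν14, hν]
    have hKe : K * (3/4) ≤ K * Real.exp (-ν*t) :=
      mul_le_mul_of_nonneg_left (by linarith only [he1, hνt]) hK_pos.le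
    have hCTt : CT * t ≤ K/4 :=
      le_trans (mul_le_mul_of_nonneg_left ht.2 hCT_nonneg) hTK
    linarith only [hwt, hKe, hCTt]
  have haT8 : ∀ t ∈ Icc (0:ℝ) T, A0/8 ≤ ‖ω1 t‖ ^ 2 := by
    intro t ht
    have h := hA1low t ht
    have h2 := pow_le_pow_left₀ (by linarith only [hK_pos] : (0:ℝ) ≤ K/2) h 2
    have : (K/2)^2 = A0/8 := by rw [div_pow, hKsq]; ring
    linarith only [h2, this]
  -- fast decay of S = |ω5|²+|ω7|² on [0,T]
  obtain ⟨BOR, hBOR_def⟩ : ∃ x : ℝ, x = (2 * dd^2 * N0 / D5) / (D5 * A0 / 8) := ⟨_, rfl⟩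
  have hBOR_nonneg : 0 ≤ BOR := by
    rw [hBOR_def]
    apply div_nonneg
    · apply div_nonneg _ hD5_pos.le
      have := sq_nonneg dd
      nlinarith only [this, hN0_pos]
    · have := mul_pos hD5_pos hA0
      linarith
  have hSineq : ∀ s ∈ Icc (0:ℝ) T,
      ((-(2*mu) * ‖ω5 s‖ ^ 2
        - 2*dd * (ω1 s * ω3 s * (starRingEnd ℂ) (ω5 s)).re
        - 2*D5 * ‖ω1 s‖ ^ 2 * ‖ω5 s‖ ^ 2
        - 2*D3 * ‖ω3 s‖ ^ 2 * ‖ω5 s‖ ^ 2)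
      + (-(2*mu) * ‖ω7 s‖ ^ 2
        + 2*dd * (ω1 s * (starRingEnd ℂ) (ω3 s) * (starRingEnd ℂ) (ω7 s)).re
        - 2*D5 * ‖ω1 s‖ ^ 2 * ‖ω7 s‖ ^ 2
        - 2*D3 * ‖ω3 s‖ ^ 2 * ‖ω7 s‖ ^ 2))
      ≤ -(D5 * A0 / 8) * ((‖ω5 s‖ ^ 2 + ‖ω7 s‖ ^ 2) - BOR) := by
    intro s hs
    have ha8 := haT8 s hs
    have hb := hb_le s hs.1
    have hX2 := (hXb s).2
    have hY1 := (hYb s).1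
    have key : D5 * (((-(2*mu) * ‖ω5 s‖ ^ 2
        - 2*dd * (ω1 s * ω3 s * (starRingEnd ℂ) (ω5 s)).re
        - 2*D5 * ‖ω1 s‖ ^ 2 * ‖ω5 s‖ ^ 2
        - 2*D3 * ‖ω3 s‖ ^ 2 * ‖ω5 s‖ ^ 2)
      + (-(2*mu) * ‖ω7 s‖ ^ 2
        + 2*dd * (ω1 s * (starRingEnd ℂ) (ω3 s) * (starRingEnd ℂ) (ω7 s)).re
        - 2*D5 * ‖ω1 s‖ ^ 2 * ‖ω7 s‖ ^ 2
        - 2*D3 * ‖ω3 s‖ ^ 2 * ‖ω7 s‖ ^ 2)))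
        ≤ D5 * (-(D5 * A0 / 8) * ((‖ω5 s‖ ^ 2 + ‖ω7 s‖ ^ 2) - BOR)) := by
      have hrB : D5 * ((D5 * A0 / 8) * BOR) = 2 * dd^2 * N0 := by
        rw [hBOR_def]
        field_simp
      have L1 : 0 ≤ D5^2 * ((‖ω1 s‖ ^ 2 - A0/8)
          * (‖ω5 s‖ ^ 2 + ‖ω7 s‖ ^ 2)) :=
        mul_nonneg (sq_nonneg _) (mul_nonneg (by linarith only [ha8]) (by positivity))
      have L2 : 0 ≤ dd^2 * (N0 - ‖ω3 s‖ ^ 2) :=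
        mul_nonneg (sq_nonneg _) (by linarith only [hb])
      have L3 : 0 ≤ (D5 * ‖ω1 s‖ * ‖ω5 s‖ - dd * ‖ω3 s‖)^2 :=
        sq_nonneg _
      have L4 : 0 ≤ (D5 * ‖ω1 s‖ * ‖ω7 s‖ - dd * ‖ω3 s‖)^2 :=
        sq_nonneg _
      have hmu_nonneg : 0 ≤ mu := by rw [hmu_eq]; linarith only [hp1_pos, hν]
      have L5 : 0 ≤ D5 * mu * (‖ω5 s‖ ^ 2 + ‖ω7 s‖ ^ 2) :=
        mul_nonneg (mul_nonneg hD5_pos.le hmu_nonneg) (by positivity)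
      have L6 : 0 ≤ D5 * D3 * (‖ω3 s‖ ^ 2
          * (‖ω5 s‖ ^ 2 + ‖ω7 s‖ ^ 2)) :=
        mul_nonneg (mul_nonneg hD5_pos.le hD3_pos.le) (by positivity)
      have L7 : (D5*dd) * (-(ω1 s * ω3 s * (starRingEnd ℂ) (ω5 s)).re)
          ≤ (D5*dd) * (‖ω1 s‖ * ‖ω3 s‖ * ‖ω5 s‖) :=
        mul_le_mul_of_nonneg_left (by linarith only [hX2])
          (mul_nonneg hD5_pos.le hdd_pos.le)
      have L8 : (D5*dd) * ((ω1 s * (starRingEnd ℂ) (ω3 s) * (starRingEnd ℂ) (ω7 s)).re)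
          ≤ (D5*dd) * (‖ω1 s‖ * ‖ω3 s‖ * ‖ω7 s‖) :=
        mul_le_mul_of_nonneg_left hY1 (mul_nonneg hD5_pos.le hdd_pos.le)
      nlinarith only [hrB, L1, L2, L3, L4, L5, L6, L7, L8]
    exact le_of_mul_le_mul_left key hD5_pos
  have hST : (‖ω5 T‖ ^ 2 + ‖ω7 T‖ ^ 2)
      ≤ B0 * Real.exp (-(D5 * A0 / 8) * T) + BOR := by
    have h := expDecayIcc
      (f := fun s => (‖ω5 s‖ ^ 2 + ‖ω7 s‖ ^ 2) - BOR)
      (F := fun s => (-(2*mu) * ‖ω5 s‖ ^ 2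
        - 2*dd * (ω1 s * ω3 s * (starRingEnd ℂ) (ω5 s)).re
        - 2*D5 * ‖ω1 s‖ ^ 2 * ‖ω5 s‖ ^ 2
        - 2*D3 * ‖ω3 s‖ ^ 2 * ‖ω5 s‖ ^ 2)
      + (-(2*mu) * ‖ω7 s‖ ^ 2
        + 2*dd * (ω1 s * (starRingEnd ℂ) (ω3 s) * (starRingEnd ℂ) (ω7 s)).re
        - 2*D5 * ‖ω1 s‖ ^ 2 * ‖ω7 s‖ ^ 2
        - 2*D3 * ‖ω3 s‖ ^ 2 * ‖ω7 s‖ ^ 2))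
      (c := -(D5 * A0 / 8)) hT_pos.le
      (fun s hs => (((hd5 s hs.1).add (hd7 s hs.1))).sub_const BOR)
      (fun s hs => by
        have := hSineq s hs
        beta_reduce
        linarith only [this])
    beta_reduce at h
    rw [hinitB] at h
    have hexp : 0 ≤ Real.exp (-(D5 * A0 / 8) * (T - 0)) := Real.exp_nonneg _
    have h2 : (B0 - BOR) * Real.exp (-(D5 * A0 / 8) * (T - 0))
        ≤ B0 * Real.exp (-(D5 * A0 / 8) * (T - 0)) := by
      have := mul_le_mul_of_nonneg_right (by linarith only [hBOR_nonneg] : B0 - BOR ≤ B0) hexp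
      linarith only [this]
    have h3 : Real.exp (-(D5 * A0 / 8) * (T - 0)) = Real.exp (-(D5 * A0 / 8) * T) := by
      norm_num
    rw [h3] at h h2
    linarith only [h, h2]
  -- numerics: S T ≤ eps
  have hexpT : B0 * Real.exp (-(D5 * A0 / 8) * T) ≤ eps/2 := by
    have hrhoT : (D5 * A0 / 8) * T = KK / ν := by
      rw [hD5c5, hKK_def]; field_simp
    have hKKν1 : KK / ν1 = max (Real.log (2 * B0 / eps)) 1 := by
      rw [hν1_def]
      field_simp
    have hKKmono : KK / ν1 ≤ KK / ν := by
      rw [div_le_div_iff₀ hν1_pos hν]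
      nlinarith only [hKK_pos, hνν1, hν]
    have hlog : Real.log (2 * B0 / eps) ≤ KK / ν := by
      have := le_max_left (Real.log (2 * B0 / eps)) 1
      linarith only [this, hKKν1 ▸ hKKmono]
    have harg : -(D5 * A0 / 8) * T = -(KK/ν) := by rw [← hrhoT]; ring
    rw [harg]
    have hmono : Real.exp (-(KK/ν)) ≤ Real.exp (-(Real.log (2 * B0 / eps))) :=
      Real.exp_le_exp.2 (by linarith only [hlog])
    have hpos2B : 0 < 2 * B0 / eps := by positivity
    have hexplog : Real.exp (-(Real.log (2 * B0 / eps))) = (2 * B0 / eps)⁻¹ := by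
      rw [Real.exp_neg, Real.exp_log hpos2B]
    have heq : B0 * (2 * B0 / eps)⁻¹ = eps/2 := by
      field_simp
    calc B0 * Real.exp (-(KK/ν)) ≤ B0 * (2 * B0 / eps)⁻¹ := by
          rw [← hexplog]
          exact mul_le_mul_of_nonneg_left hmono hB0.le
      _ = eps/2 := heq
  have hBOR_le : BOR ≤ eps/2 := by
    have e2 : BOR * (c5^2 * A0) = 16 * dd^2 * N0 * ν^2 := by
      rw [hBOR_def, hD5c5]
      field_simp
      ring
    have h64 : (0:ℝ) ≤ 64 * dd^2 * N0 :=
      mul_nonneg (mul_nonneg (by norm_num) (sq_nonneg dd)) hN0_pos.le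
    have hν2' : ν^2 ≤ eps * c5^2 * A0 / (64 * dd^2 * N0) := by
      rw [← hν2sq]
      exact pow_le_pow_left₀ hν.le hνν2 2
    have h3 := mul_le_mul_of_nonneg_left hν2' h64
    have e3 : 64 * dd^2 * N0 * (eps * c5^2 * A0 / (64 * dd^2 * N0)) = eps * c5^2 * A0 := by
      field_simp
    have hc5A0 : 0 < c5^2 * A0 := mul_pos (pow_pos hc5_pos 2) hA0
    have : BOR * (c5^2 * A0) ≤ (eps/2) * (c5^2 * A0) := by
      rw [e2]
      have hpos := mul_pos (mul_pos heps_pos (pow_pos hc5_pos 2)) hA0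
      linarith only [h3, e3, hpos]
    exact le_of_mul_le_mul_right this hc5A0
  have hSTeps : ‖ω5 T‖ ^ 2 + ‖ω7 T‖ ^ 2 ≤ eps := by
    linarith only [hST, hexpT, hBOR_le]
  have hMT : A0/16 ≤ ‖ω1 T‖ ^ 2
      - kap * (‖ω5 T‖ ^ 2 + ‖ω7 T‖ ^ 2) := by
    have h8 := haT8 T (right_mem_Icc.2 hT_pos.le)
    have hke : kap * eps = A0/16 := by
      rw [hkap_def, heps_def]
      field_simp
    have h2 := mul_le_mul_of_nonneg_left hSTeps hkap_pos.le
    linarith only [h8, hke, h2]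
  -- tail bound for t ≥ T
  have htail : ∀ t : ℝ, T ≤ t →
      ‖ω3 t‖ ^ 2 / ‖ω1 t‖ ^ 2
        ≤ ((16*N0/A0) * Real.exp (2*ν*(1 - 1/δ^2)*T)) * Real.exp (-(2*ν*(1 - 1/δ^2))*t) := by
    intro t htT
    have ht0 : (0:ℝ) ≤ t := le_trans hT_pos.le htT
    have hbt : ‖ω3 t‖ ^ 2 ≤ N0 * Real.exp (-(2*ν)*(t - T)) := by
      have h := hNdecay T t hT_pos.le htT
      have h2 := hNle T hT_pos.le
      have h3 : 0 ≤ lam * (‖ω5 t‖ ^ 2 + ‖ω7 t‖ ^ 2) :=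
        mul_nonneg hlam_pos.le (by positivity)
      have h4 := mul_le_mul_of_nonneg_right h2 (Real.exp_nonneg (-(2*ν)*(t - T)))
      linarith only [h, h3, h4]
    have hat : (A0/16) * Real.exp (-(2*p1)*(t - T)) ≤ ‖ω1 t‖ ^ 2 := by
      have h := hMgrow T t hT_pos.le htT
      have h2 := mul_le_mul_of_nonneg_right hMT (Real.exp_nonneg (-(2*p1)*(t - T)))
      have h3 : 0 ≤ kap * (‖ω5 t‖ ^ 2 + ‖ω7 t‖ ^ 2) :=
        mul_nonneg hkap_pos.le (by positivity)
      linarith only [h, h2, h3]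
    rw [div_le_iff₀ (hapos t ht0)]
    have hRHS0 : 0 ≤ (16*N0/A0) * Real.exp (2*ν*(1 - 1/δ^2)*T) * Real.exp (-(2*ν*(1 - 1/δ^2))*t) :=
      mul_nonneg (mul_nonneg (div_nonneg (by linarith only [hN0_pos]) hA0.le)
        (Real.exp_nonneg _)) (Real.exp_nonneg _)
    have hE : Real.exp (2*ν*(1 - 1/δ^2)*T) * Real.exp (-(2*ν*(1 - 1/δ^2))*t)
        * Real.exp (-(2*(ν/δ^2))*(t - T)) = Real.exp (-(2*ν)*(t - T)) := by
      rw [← Real.exp_add, ← Real.exp_add]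
      congr 1
      field_simp
      try ring
    have hc : 16*N0/A0*(A0/16) = N0 := by field_simp
    have hkey : ((16*N0/A0) * Real.exp (2*ν*(1 - 1/δ^2)*T)) * Real.exp (-(2*ν*(1 - 1/δ^2))*t)
        * ((A0/16) * Real.exp (-(2*p1)*(t - T))) = N0 * Real.exp (-(2*ν)*(t - T)) := by
      rw [hp1_def]
      calc ((16*N0/A0) * Real.exp (2*ν*(1 - 1/δ^2)*T)) * Real.exp (-(2*ν*(1 - 1/δ^2))*t)
          * ((A0/16) * Real.exp (-(2*(ν/δ^2))*(t - T)))
          = (16*N0/A0*(A0/16)) * (Real.exp (2*ν*(1 - 1/δ^2)*T)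
            * Real.exp (-(2*ν*(1 - 1/δ^2))*t) * Real.exp (-(2*(ν/δ^2))*(t - T))) := by ring
        _ = N0 * Real.exp (-(2*ν)*(t - T)) := by rw [hE, hc]
    calc ‖ω3 t‖ ^ 2 ≤ N0 * Real.exp (-(2*ν)*(t - T)) := hbt
      _ = ((16*N0/A0) * Real.exp (2*ν*(1 - 1/δ^2)*T)) * Real.exp (-(2*ν*(1 - 1/δ^2))*t)
          * ((A0/16) * Real.exp (-(2*p1)*(t - T))) := hkey.symm
      _ ≤ ((16*N0/A0) * Real.exp (2*ν*(1 - 1/δ^2)*T)) * Real.exp (-(2*ν*(1 - 1/δ^2))*t)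
          * ‖ω1 t‖ ^ 2 := by
            exact mul_le_mul_of_nonneg_left hat (by
              have := hRHS0
              linarith only [this])
  -- maximum of U on [0,T]
  have hbcont : ContinuousOn (fun s => ‖ω3 s‖ ^ 2) (Icc (0:ℝ) T) :=
    fun x hx => ((hdb x hx.1).continuousAt).continuousWithinAt
  have hacont : ContinuousOn (fun s => ‖ω1 s‖ ^ 2) (Icc (0:ℝ) T) :=
    fun x hx => ((hda x hx.1).continuousAt).continuousWithinAt
  have hUcont : ContinuousOn (fun s => ‖ω3 s‖ ^ 2 / ‖ω1 s‖ ^ 2)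
      (Icc (0:ℝ) T) :=
    hbcont.div hacont (fun x hx => ne_of_gt (hapos x hx.1))
  obtain ⟨tm, htm, hmax⟩ := isCompact_Icc.exists_isMaxOn
    ⟨0, left_mem_Icc.2 hT_pos.le⟩ hUcont
  have hUm_nonneg : 0 ≤ ‖ω3 tm‖ ^ 2 / ‖ω1 tm‖ ^ 2 :=
    div_nonneg (by positivity) (by positivity)
  have hγpos : 0 < 2*ν*(1 - 1/δ^2) := by
    have h1 : 1/δ^2 < 1 := (div_lt_one hδ2).2 hδsq
    have := mul_pos hν (by linarith only [h1] : (0:ℝ) < 1 - 1/δ^2)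
    linarith only [this]
  obtain ⟨M2, hM2_def⟩ : ∃ x : ℝ, x = (16*N0/A0) * Real.exp (2*ν*(1 - 1/δ^2)*T)
      + (‖ω3 tm‖ ^ 2 / ‖ω1 tm‖ ^ 2 + 1)
          * Real.exp (2*ν*(1 - 1/δ^2)*T) := ⟨_, rfl⟩
  have hM2_pos : 0 < M2 := by
    rw [hM2_def]
    have h1 : 0 ≤ (16*N0/A0) * Real.exp (2*ν*(1 - 1/δ^2)*T) :=
      mul_nonneg (div_nonneg (by linarith only [hN0_pos]) hA0.le) (Real.exp_nonneg _)
    have h2 : 0 < (‖ω3 tm‖ ^ 2 / ‖ω1 tm‖ ^ 2 + 1)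
        * Real.exp (2*ν*(1 - 1/δ^2)*T) :=
      mul_pos (by linarith only [hUm_nonneg]) (Real.exp_pos _)
    linarith only [h1, h2]
  have hfinal : ∀ t : ℝ, 0 ≤ t →
      ‖ω3 t‖ ^ 2 / ‖ω1 t‖ ^ 2
        ≤ M2 * Real.exp (-(2 * ν * (1 - 1 / δ ^ 2)) * t) := by
    intro t ht
    rcases le_total t T with hle | hge
    · have h1 : ‖ω3 t‖ ^ 2 / ‖ω1 t‖ ^ 2
          ≤ ‖ω3 tm‖ ^ 2 / ‖ω1 tm‖ ^ 2 := hmax ⟨ht, hle⟩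
      have hE2 : 1 ≤ Real.exp (2*ν*(1 - 1/δ^2)*T) * Real.exp (-(2*ν*(1 - 1/δ^2))*t) := by
        rw [← Real.exp_add]
        calc (1:ℝ) = Real.exp 0 := Real.exp_zero.symm
          _ ≤ _ := Real.exp_le_exp.2 (by nlinarith only [hγpos, hle, ht])
      have h2 : ‖ω3 tm‖ ^ 2 / ‖ω1 tm‖ ^ 2 + 1
          ≤ (‖ω3 tm‖ ^ 2 / ‖ω1 tm‖ ^ 2 + 1)
            * (Real.exp (2*ν*(1 - 1/δ^2)*T) * Real.exp (-(2*ν*(1 - 1/δ^2))*t)) :=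
        le_mul_of_one_le_right (by linarith only [hUm_nonneg]) hE2
      have h3 : 0 ≤ (16*N0/A0) * Real.exp (2*ν*(1 - 1/δ^2)*T)
          * Real.exp (-(2*ν*(1 - 1/δ^2))*t) :=
        mul_nonneg (mul_nonneg (div_nonneg (by linarith only [hN0_pos]) hA0.le)
          (Real.exp_nonneg _)) (Real.exp_nonneg _)
      rw [hM2_def]
      nlinarith only [h1, h2, h3, hUm_nonneg]
    · have h1 := htail t hge
      have h2 : 0 ≤ (‖ω3 tm‖ ^ 2 / ‖ω1 tm‖ ^ 2 + 1)
          * Real.exp (2*ν*(1 - 1/δ^2)*T) * Real.exp (-(2*ν*(1 - 1/δ^2))*t) :=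
        mul_nonneg (mul_nonneg (by linarith only [hUm_nonneg]) (Real.exp_nonneg _))
          (Real.exp_nonneg _)
      rw [hM2_def]
      nlinarith only [h1, h2]
  refine ⟨M2, hM2_pos, hfinal, ?_⟩
  have h0 : Filter.Tendsto (fun u : ℝ => M2 * Real.exp (-(2 * ν * (1 - 1 / δ ^ 2)) * u))
      Filter.atTop (nhds 0) := by
    have hlin : Filter.Tendsto (fun u : ℝ => -(2 * ν * (1 - 1 / δ ^ 2)) * u)
        Filter.atTop Filter.atBot :=
      (Filter.tendsto_const_mul_atBot_of_neg (by linarith only [hγpos])).mpr Filter.tendsto_id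
    have h1 := Real.tendsto_exp_atBot.comp hlin
    have h2 := h1.const_mul M2
    simpa using h2
  refine tendsto_of_tendsto_of_tendsto_of_le_of_le' tendsto_const_nhds h0 ?_ ?_
  · exact Filter.Eventually.of_forall (fun u => div_nonneg (by positivity) (by positivity))
  · exact (Filter.eventually_ge_atTop 0).mono (fun u hu => hfinal u hu)
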